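/- Let A1 be a self-adjoint operator on a Hilbert space H1 and let V : B(H1) → B(H1) be a map such that for every bounded operator X with ‖X‖ ≤ r one has ‖V(A1 + X)‖ ≤ v/(d − r) and ‖V(A1 + X) − V(A1 + Y)‖ ≤ (v/(d − r)²)‖X − Y‖ whenever ‖X‖, ‖Y‖ ≤ r, where 0 < v < d²/4. Then for every r with d/2 − sqrt(d²/4 − v) ≤ r < d − sqrt(v), the map F(X) = V(A1 + X) has a unique fixed point X in the closed ball of radius r in B(H1); moreover this fixed point is the same for all such r and satisfies ‖X‖ ≤ d/2 − sqrt(d²/4 − v). -/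

import Mathlib

set_option linter.unusedVariables false
set_option maxHeartbeats 1000000

/-- abstract core of Theorem 1, solvability of the basic equation.
`F X = V(A₁ + X)` satisfies `‖F X‖ ≤ v/(d − ‖X‖)` and the Lipschitz bound
`‖F X − F Y‖ ≤ v/(d − r)² ‖X − Y‖` on balls of radius `r < d`, with `0 < v < d²/4`.
Then for every `r` with `d/2 − √(d²/4 − v) ≤ r < d − √v`, `F` has a unique fixed point in the
closed ball of radius `r`; this fixed point is the same for all such `r` and lies in the ball
of radius `d/2 − √(d²/4 − v)`. -/
theorem basic_equation_unique_fixed_point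
    {H1 : Type*} [NormedAddCommGroup H1] [InnerProductSpace ℂ H1] [CompleteSpace H1]
    (F : (H1 →L[ℂ] H1) → (H1 →L[ℂ] H1))
    (d v : ℝ) (hd : 0 < d) (hv : 0 < v) (hvd : v < d ^ 2 / 4)
    (hbound : ∀ r : ℝ, 0 ≤ r → r < d → ∀ X : H1 →L[ℂ] H1, ‖X‖ ≤ r →
      ‖F X‖ ≤ v / (d - r))
    (hlip : ∀ r : ℝ, 0 ≤ r → r < d → ∀ X Y : H1 →L[ℂ] H1, ‖X‖ ≤ r → ‖Y‖ ≤ r →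
      ‖F X - F Y‖ ≤ v / (d - r) ^ 2 * ‖X - Y‖) :
    ∃ X : H1 →L[ℂ] H1,
      ‖X‖ ≤ d / 2 - Real.sqrt (d ^ 2 / 4 - v) ∧ F X = X ∧
      ∀ r : ℝ, d / 2 - Real.sqrt (d ^ 2 / 4 - v) ≤ r → r < d - Real.sqrt v →
        ∀ Y : H1 →L[ℂ] H1, ‖Y‖ ≤ r → F Y = Y → Y = X := by
  set s := Real.sqrt (d ^ 2 / 4 - v) with hs_def
  have hs0 : 0 ≤ s := Real.sqrt_nonneg _
  have hs2 : s ^ 2 = d ^ 2 / 4 - v := Real.sq_sqrt (by linarith)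
  have hsv : Real.sqrt v ^ 2 = v := Real.sq_sqrt hv.le
  have hsv0 : 0 ≤ Real.sqrt v := Real.sqrt_nonneg _
  have hsd2 : s < d / 2 := by nlinarith
  set r₀ : ℝ := d / 2 - s with hr₀_def
  have hr₀pos : 0 < r₀ := by simp only [hr₀_def]; linarith
  have hr₀d : r₀ < d := by simp only [hr₀_def]; linarith
  have hkey : r₀ * (d - r₀) = v := by simp only [hr₀_def]; nlinarith
  have hdr₀ : 0 < d - r₀ := by linarith
  have hval : v / (d - r₀) = r₀ := by field_simp [hkey, mul_comm]; linarith
  have hs0pos : 0 < s := Real.sqrt_pos.mpr (by linarith)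
  have hklt : r₀ / (d - r₀) < 1 := by
    rw [div_lt_one hdr₀]; simp only [hr₀_def]; linarith
  have hk : v / (d - r₀) ^ 2 = r₀ / (d - r₀) := by
    rw [← hkey]; field_simp
  -- contraction on the closed ball of radius r₀
  have hmem : ∀ x : H1 →L[ℂ] H1, x ∈ Metric.closedBall (0 : H1 →L[ℂ] H1) r₀ ↔ ‖x‖ ≤ r₀ := by
    intro x; simp [Metric.mem_closedBall, dist_eq_norm]
  have hsc : IsComplete (Metric.closedBall (0 : H1 →L[ℂ] H1) r₀) :=
    Metric.isClosed_closedBall.isComplete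
  have hsf : Set.MapsTo F (Metric.closedBall (0 : H1 →L[ℂ] H1) r₀)
      (Metric.closedBall (0 : H1 →L[ℂ] H1) r₀) := by
    intro x hx
    rw [hmem] at hx ⊢
    calc ‖F x‖ ≤ v / (d - r₀) := hbound r₀ hr₀pos.le hr₀d x hx
    _ = r₀ := hval
  set K : NNReal := ⟨r₀ / (d - r₀), div_nonneg hr₀pos.le hdr₀.le⟩ with hK_def
  have hcontr : ContractingWith K (hsf.restrict F _ _) := by
    constructor
    · exact_mod_cast hklt
    · apply LipschitzWith.of_dist_le_mul
      rintro ⟨x, hx⟩ ⟨y, hy⟩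
      simp only [Subtype.dist_eq, dist_eq_norm, Set.MapsTo.restrict, Subtype.map]
      have := hlip r₀ hr₀pos.le hr₀d x y ((hmem x).mp hx) ((hmem y).mp hy)
      calc ‖F x - F y‖ ≤ v / (d - r₀) ^ 2 * ‖x - y‖ := this
      _ = (K : ℝ) * ‖x - y‖ := by rw [hk]; rfl
  obtain ⟨X, hXmem, hXF, -⟩ := hcontr.exists_fixedPoint' hsc hsf
    (Metric.mem_closedBall_self hr₀pos.le) (edist_ne_top _ _)
  have hXball : ‖X‖ ≤ r₀ := (hmem X).mp hXmem
  refine ⟨X, hXball, hXF, ?_⟩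
  intro r hr1 hr2 Y hY hYF
  -- r is small: r < d/2 + s, hence ‖Y‖ ≤ r₀
  have hYd : ‖Y‖ < d := lt_of_le_of_lt hY (by linarith)
  have hYb := hbound ‖Y‖ (norm_nonneg Y) hYd Y le_rfl
  rw [hYF] at hYb
  have hYsmall : ‖Y‖ < d / 2 + s := by
    have h2v : 2 * Real.sqrt v ≤ d := by nlinarith
    nlinarith
  have hquad : ‖Y‖ * (d - ‖Y‖) ≤ v := by
    have := (le_div_iff₀ (by linarith : (0:ℝ) < d - ‖Y‖)).mp hYb
    linarith
  have hYr₀ : ‖Y‖ ≤ r₀ := by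
    by_contra h
    push_neg at h
    have h1 : (‖Y‖ - r₀) * ((d / 2 + s) - ‖Y‖) > 0 :=
      mul_pos (by linarith) (by linarith)
    have hprod : (‖Y‖ - r₀) * ((d / 2 + s) - ‖Y‖) = -‖Y‖ ^ 2 + d * ‖Y‖ - v := by
      simp only [hr₀_def]; linear_combination hs2
    have hexp : ‖Y‖ * (d - ‖Y‖) = d * ‖Y‖ - ‖Y‖ ^ 2 := by ring
    linarith [hquad, hexp, hprod, h1]
  -- uniqueness via contraction on ball r₀
  have hl := hlip r₀ hr₀pos.le hr₀d Y X hYr₀ hXball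
  rw [hYF, hXF, hk] at hl
  have hnn : 0 ≤ ‖Y - X‖ := norm_nonneg _
  have h0 : ‖Y - X‖ ≤ 0 := by nlinarith
  have : Y - X = 0 := by rw [← norm_le_zero_iff]; exact h0
  exact sub_eq_zero.mp this
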